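/- Let f(x) = (1/2)‖y − Ax‖₂² + λ·TV(x) where TV(x) = Σᵢ ‖Dᵢx‖₂ and the common kernel of all Dᵢ is span{1}. If 1 ∉ ker(A), then f is coercive on ℝⁿ and its set of minimizers is nonempty. -/

import Mathlib

open Matrix Filter

private lemma tvaux_norm_eq (k : ℕ) (v : Fin k → ℝ) :
    Real.sqrt (∑ i, v i ^ 2) = ‖(WithLp.equiv 2 (Fin k → ℝ)).symm v‖ := by
  rw [EuclideanSpace.norm_eq]; simp [sq_abs]

private lemma tvaux_tri (k : ℕ) (a b : Fin k → ℝ) :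
    Real.sqrt (∑ i, (b i)^2) - Real.sqrt (∑ i, (a i)^2) ≤ Real.sqrt (∑ i, (a i - b i)^2) := by
  have e3 : Real.sqrt (∑ i, (a i - b i)^2) = ‖(WithLp.equiv 2 (Fin k → ℝ)).symm (a - b)‖ :=
    tvaux_norm_eq k (a - b)
  rw [tvaux_norm_eq, tvaux_norm_eq, e3]
  have h2 : (WithLp.equiv 2 (Fin k → ℝ)).symm (a - b) =
      (WithLp.equiv 2 (Fin k → ℝ)).symm a - (WithLp.equiv 2 (Fin k → ℝ)).symm b := rfl
  rw [h2]
  have := norm_sub_norm_le ((WithLp.equiv 2 (Fin k → ℝ)).symm b)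
    ((WithLp.equiv 2 (Fin k → ℝ)).symm a)
  rw [norm_sub_rev] at this
  linarith

private lemma tvaux_sqrt_zero (k : ℕ) (v : Fin k → ℝ) (h : Real.sqrt (∑ i, v i ^ 2) = 0) :
    v = 0 := by
  funext i
  have hs : ∑ i, v i ^ 2 = 0 :=
    le_antisymm (Real.sqrt_eq_zero'.mp h) (Finset.sum_nonneg fun i _ => sq_nonneg _)
  have := (Finset.sum_eq_zero_iff_of_nonneg (fun i _ => sq_nonneg (v i))).mp hs i (Finset.mem_univ i)
  exact pow_eq_zero_iff two_ne_zero |>.mp this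

private lemma tvaux_smul (p q : ℕ) (M : Matrix (Fin p) (Fin q) ℝ) (t : ℝ) (x : Fin q → ℝ) :
    Real.sqrt (∑ i, (M.mulVec (t • x) i)^2) = |t| * Real.sqrt (∑ i, (M.mulVec x i)^2) := by
  simp [Matrix.mulVec_smul, mul_pow, ← Finset.mul_sum, Real.sqrt_mul (sq_nonneg t),
    Real.sqrt_sq_eq_abs]

/-- The TV-regularized objective `f x = (1/2)‖y − A x‖² + λ Σᵢ ‖Dᵢ x‖₂`, where the
common kernel of the `Dᵢ` is the span of the all-ones vector and `1 ∉ ker A`, is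
coercive and its set of minimizers is nonempty. -/
theorem tv_objective_has_minimizer (m n N : ℕ) (lam : ℝ) (hlam : 0 < lam)
    (A : Matrix (Fin m) (Fin N) ℝ) (y : Fin m → ℝ)
    (D : Fin n → Matrix (Fin 2) (Fin N) ℝ)
    (hker : ∀ x : Fin N → ℝ, (∀ i, (D i).mulVec x = 0) ↔ ∃ α : ℝ, x = fun _ => α)
    (hA : A.mulVec (fun _ => 1) ≠ 0) :
    let f : EuclideanSpace ℝ (Fin N) → ℝ :=
      fun x => (1 / 2) * ∑ i, (y i - A.mulVec (fun j => x j) i) ^ 2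
        + lam * ∑ i, Real.sqrt (∑ j, ((D i).mulVec (fun j => x j) j) ^ 2)
    Tendsto f (cocompact (EuclideanSpace ℝ (Fin N))) atTop ∧
    ∃ x, ∀ w, f x ≤ f w := by
  intro f
  classical
  -- the auxiliary "norm" h
  set h : EuclideanSpace ℝ (Fin N) → ℝ := fun x =>
    Real.sqrt (∑ i, (A.mulVec (fun j => x j) i)^2)
      + ∑ i, Real.sqrt (∑ j, ((D i).mulVec (fun j => x j) j)^2) with hh
  have h_nonneg : ∀ x : EuclideanSpace ℝ (Fin N), 0 ≤ h x := fun x =>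
    add_nonneg (Real.sqrt_nonneg _) (Finset.sum_nonneg fun i _ => Real.sqrt_nonneg _)
  have hconth : Continuous h := by
    apply Continuous.add
    · apply Real.continuous_sqrt.comp
      apply continuous_finset_sum; intro i _
      simp only [Matrix.mulVec, dotProduct]; fun_prop
    · apply continuous_finset_sum; intro i _
      apply Real.continuous_sqrt.comp
      apply continuous_finset_sum; intro j _
      simp only [Matrix.mulVec, dotProduct]; fun_prop
  have hcontf : Continuous f := by
    have hf : f = fun x : EuclideanSpace ℝ (Fin N) =>
        (1 / 2) * ∑ i, (y i - A.mulVec (fun j => x j) i) ^ 2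
        + lam * ∑ i, Real.sqrt (∑ j, ((D i).mulVec (fun j => x j) j) ^ 2) := rfl
    rw [hf]
    apply Continuous.add
    · apply Continuous.mul continuous_const
      apply continuous_finset_sum; intro i _
      simp only [Matrix.mulVec, dotProduct]; fun_prop
    · apply Continuous.mul continuous_const
      apply continuous_finset_sum; intro i _
      apply Real.continuous_sqrt.comp
      apply continuous_finset_sum; intro j _
      simp only [Matrix.mulVec, dotProduct]; fun_prop
  -- positivity of h off zero
  have hpos : ∀ x : EuclideanSpace ℝ (Fin N), x ≠ 0 → 0 < h x := by
    intro x hx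
    rcases lt_or_eq_of_le (h_nonneg x) with hlt | heq
    · exact hlt
    exfalso
    have h0 : Real.sqrt (∑ i, (A.mulVec (fun j => x j) i)^2)
        + ∑ i, Real.sqrt (∑ j, ((D i).mulVec (fun j => x j) j)^2) = 0 := heq.symm
    have h1 := Real.sqrt_nonneg (∑ i, (A.mulVec (fun j => x j) i)^2)
    have h2 : (0:ℝ) ≤ ∑ i, Real.sqrt (∑ j, ((D i).mulVec (fun j => x j) j)^2) :=
      Finset.sum_nonneg fun i _ => Real.sqrt_nonneg _
    have hA0 : Real.sqrt (∑ i, (A.mulVec (fun j => x j) i)^2) = 0 := by linarith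
    have hT0 : ∑ i, Real.sqrt (∑ j, ((D i).mulVec (fun j => x j) j)^2) = 0 := by linarith
    have hDzero : ∀ i, (D i).mulVec (fun j => x j) = 0 := by
      intro i
      apply tvaux_sqrt_zero
      exact (Finset.sum_eq_zero_iff_of_nonneg (fun i _ => Real.sqrt_nonneg _)).mp
        hT0 i (Finset.mem_univ i)
    obtain ⟨α, hα⟩ := (hker _).mp hDzero
    have hAz : A.mulVec (fun j => x j) = 0 := tvaux_sqrt_zero _ _ hA0
    have hsm : (fun j : Fin N => x j) = α • (fun _ : Fin N => (1:ℝ)) := by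
      rw [hα]; funext j; simp
    rw [hsm, Matrix.mulVec_smul] at hAz
    rcases smul_eq_zero.mp hAz with hα0 | hA1
    · apply hx
      ext j
      have hxj := congrFun hα j
      simp only at hxj
      rw [hα0] at hxj
      exact hxj
    · exact hA hA1
  -- homogeneity of h
  have hscale : ∀ (t : ℝ) (x : EuclideanSpace ℝ (Fin N)), h (t • x) = |t| * h x := by
    intro t x
    have hsm : (fun j => (t • x) j) = t • (fun j => x j) := rfl
    show Real.sqrt (∑ i, (A.mulVec (fun j => (t • x) j) i)^2)
      + ∑ i, Real.sqrt (∑ j, ((D i).mulVec (fun j => (t • x) j) j)^2)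
      = |t| * (Real.sqrt (∑ i, (A.mulVec (fun j => x j) i)^2)
      + ∑ i, Real.sqrt (∑ j, ((D i).mulVec (fun j => x j) j)^2))
    simp only [hsm, tvaux_smul]
    rw [mul_add, Finset.mul_sum]
  -- lower bound h x ≥ c ‖x‖
  have hcbound : ∃ c : ℝ, 0 < c ∧ ∀ x : EuclideanSpace ℝ (Fin N), c * ‖x‖ ≤ h x := by
    rcases Nat.eq_zero_or_pos N with hN | hN
    · refine ⟨1, one_pos, fun x => ?_⟩
      have hx0 : ‖x‖ = 0 := by
        rw [EuclideanSpace.norm_eq]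
        subst hN
        simp
      rw [hx0, mul_zero]
      exact h_nonneg x
    · haveI : Nonempty (Fin N) := Fin.pos_iff_nonempty.mp hN
      haveI : Nontrivial (EuclideanSpace ℝ (Fin N)) := by
        refine ⟨⟨EuclideanSpace.single ⟨0, hN⟩ 1, 0, fun hcon => ?_⟩⟩
        have hz : (0 : EuclideanSpace ℝ (Fin N)) ⟨0, hN⟩ = 0 := rfl
        have : (EuclideanSpace.single ⟨0, hN⟩ 1 : EuclideanSpace ℝ (Fin N)) ⟨0, hN⟩ =
            (0 : EuclideanSpace ℝ (Fin N)) ⟨0, hN⟩ := by rw [hcon]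
        rw [hz] at this
        simpa using this
      have hsph : (Metric.sphere (0:EuclideanSpace ℝ (Fin N)) 1).Nonempty := by
        refine ⟨EuclideanSpace.single ⟨0, hN⟩ (1:ℝ), ?_⟩
        simp [EuclideanSpace.norm_single]
      obtain ⟨z, hz, hzmin⟩ := (isCompact_sphere (0:EuclideanSpace ℝ (Fin N)) 1).exists_isMinOn
        hsph hconth.continuousOn
      have hz1 : ‖z‖ = 1 := by simpa using hz
      have hzne : z ≠ 0 := by
        intro hcon; rw [hcon, norm_zero] at hz1; exact zero_ne_one hz1
      refine ⟨h z, hpos z hzne, fun x => ?_⟩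
      rcases eq_or_ne x 0 with hx0 | hx0
      · rw [hx0, norm_zero, mul_zero]; exact h_nonneg 0
      · have hxn : (0:ℝ) < ‖x‖ := norm_pos_iff.mpr hx0
        have hmem : (‖x‖⁻¹ • x) ∈ Metric.sphere (0:EuclideanSpace ℝ (Fin N)) 1 := by
          simp [norm_smul, abs_of_pos (inv_pos.mpr hxn), inv_mul_cancel₀ hxn.ne']
        have hkey : h z ≤ h (‖x‖⁻¹ • x) := hzmin hmem
        have hsc : h (‖x‖⁻¹ • x) = ‖x‖⁻¹ * h x := by
          rw [hscale, abs_of_pos (inv_pos.mpr hxn)]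
        rw [hsc] at hkey
        calc h z * ‖x‖ ≤ (‖x‖⁻¹ * h x) * ‖x‖ := by nlinarith
          _ = h x := by field_simp
  obtain ⟨c, hc, hcb⟩ := hcbound
  -- lower bound f x ≥ μ * h x - C
  set ny : ℝ := Real.sqrt (∑ i, (y i)^2) with hny
  set μ : ℝ := min 1 lam with hμ
  have hμpos : 0 < μ := lt_min one_pos hlam
  have hfb : ∀ x : EuclideanSpace ℝ (Fin N), μ * h x - ny - 1/2 ≤ f x := by
    intro x
    have hfx : f x = (1 / 2) * ∑ i, (y i - A.mulVec (fun j => x j) i) ^ 2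
        + lam * ∑ i, Real.sqrt (∑ j, ((D i).mulVec (fun j => x j) j) ^ 2) := rfl
    set S : ℝ := ∑ i, (y i - A.mulVec (fun j => x j) i) ^ 2 with hS
    set T : ℝ := ∑ i, Real.sqrt (∑ j, ((D i).mulVec (fun j => x j) j) ^ 2) with hT
    set nAx : ℝ := Real.sqrt (∑ i, (A.mulVec (fun j => x j) i)^2) with hnAx
    have hhx : h x = nAx + T := rfl
    have hT_nonneg : 0 ≤ T := Finset.sum_nonneg fun i _ => Real.sqrt_nonneg _
    have hnAx_nonneg : 0 ≤ nAx := Real.sqrt_nonneg _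
    have hS_nonneg : 0 ≤ S := Finset.sum_nonneg fun i _ => sq_nonneg _
    set s : ℝ := Real.sqrt S with hs
    have hs_nonneg : 0 ≤ s := Real.sqrt_nonneg _
    have hs2 : s ^ 2 = S := Real.sq_sqrt hS_nonneg
    have htri : nAx - ny ≤ s :=
      tvaux_tri m y (A.mulVec (fun j => x j))
    have hquad : s - 1/2 ≤ (1/2) * S := by nlinarith [sq_nonneg (s - 1)]
    have hμ1 : μ ≤ 1 := min_le_left _ _
    have hμlam : μ ≤ lam := min_le_right _ _
    rw [hfx, hhx]
    nlinarith [mul_le_mul_of_nonneg_right hμ1 hnAx_nonneg,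
      mul_le_mul_of_nonneg_right hμlam hT_nonneg]
  -- coercivity
  have hcoer : Tendsto f (cocompact (EuclideanSpace ℝ (Fin N))) atTop := by
    apply tendsto_atTop_mono (fun x => ?_)
      (tendsto_atTop_add_const_right _ (-ny - 1/2)
        ((tendsto_norm_cocompact_atTop.const_mul_atTop (mul_pos hμpos hc))))
    have h1 := hfb x
    have hb : μ * c * ‖x‖ ≤ μ * h x := by
      rw [mul_assoc]
      exact mul_le_mul_of_nonneg_left (hcb x) hμpos.le
    show μ * c * ‖x‖ + (-ny - 1/2) ≤ f x
    clear_value f h ny μ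
    linarith
  exact ⟨hcoer, hcontf.exists_forall_le hcoer⟩
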